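/- For all natural numbers $p$ and all integers $\gamma, \beta$ with $0 \le \gamma \le \beta \le p$, one has $\sum_{m=\gamma}^{\beta} \binom{-p-1}{m}\binom{p+\beta}{\beta-m}\binom{m}{\gamma} = \begin{cases} \binom{-p-1}{\beta} & \text{if } \gamma = \beta \\ 0 & \text{if } \gamma < \beta,\end{cases}$ where binomial coefficients with negative top argument are generalized binomial coefficients. -/

import Mathlib

/-- Generalized binomial coefficient `x(x-1)⋯(x-k+1)/k!` for `x : ℚ`. -/
noncomputable def gbinom (x : ℚ) (k : ℕ) : ℚ :=
  (∏ i ∈ Finset.range k, (x - i)) / (Nat.factorial k)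

lemma descPochhammer_eval_eq_prod (x : ℚ) (k : ℕ) :
    (descPochhammer ℚ k).eval x = ∏ i ∈ Finset.range k, (x - i) := by
  induction k with
  | zero => simp
  | succ n ih => rw [descPochhammer_succ_eval, ih, Finset.prod_range_succ]

lemma gbinom_eq_choose (x : ℚ) (k : ℕ) : gbinom x k = Ring.choose x k := by
  have h1 : (descPochhammer ℤ k).smeval x = ∏ i ∈ Finset.range k, (x - i) := by
    rw [← Polynomial.aeval_eq_smeval, Polynomial.aeval_def, ← Polynomial.eval_map,
      descPochhammer_map, descPochhammer_eval_eq_prod]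
  rw [gbinom, ← h1, Ring.descPochhammer_eq_factorial_smul_choose, nsmul_eq_mul]
  field_simp

theorem stmt3 (p γ β : ℕ) (hγβ : γ ≤ β) (hβp : β ≤ p) :
    ∑ m ∈ Finset.Icc γ β,
      gbinom (-(p : ℚ) - 1) m * gbinom ((p : ℚ) + β) (β - m) * gbinom (m : ℚ) γ
      = if γ = β then gbinom (-(p : ℚ) - 1) β else 0 := by
  simp only [gbinom_eq_choose]
  -- step 1: trinomial revision on each term
  have hterm : ∀ m ∈ Finset.Icc γ β,
      Ring.choose (-(p : ℚ) - 1) m * Ring.choose ((p : ℚ) + β) (β - m)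
        * Ring.choose ((m : ℚ)) γ
      = Ring.choose (-(p : ℚ) - 1) γ *
          (Ring.choose (-(p : ℚ) - 1 - γ) (m - γ) * Ring.choose ((p : ℚ) + β) (β - m)) := by
    intro m hm
    obtain ⟨hγm, hmβ⟩ := Finset.mem_Icc.mp hm
    have h := Ring.choose_smul_choose (-(p : ℚ) - 1) hγm
    rw [nsmul_eq_mul] at h
    rw [show Ring.choose ((m : ℚ)) γ = (m.choose γ : ℚ) from Ring.choose_natCast m γ]
    linear_combination Ring.choose ((p : ℚ) + β) (β - m) * h
  rw [Finset.sum_congr rfl hterm, ← Finset.mul_sum]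
  -- step 2: reindex and apply Chu-Vandermonde
  have hre : ∑ m ∈ Finset.Icc γ β,
      Ring.choose (-(p : ℚ) - 1 - γ) (m - γ) * Ring.choose ((p : ℚ) + β) (β - m)
      = ∑ ij ∈ Finset.HasAntidiagonal.antidiagonal (β - γ),
          Ring.choose (-(p : ℚ) - 1 - γ) ij.1 * Ring.choose ((p : ℚ) + β) ij.2 := by
    rw [Finset.Nat.sum_antidiagonal_eq_sum_range_succ_mk]
    rw [show Finset.Icc γ β = Finset.Ico γ (β + 1) by rfl, Finset.sum_Ico_eq_sum_range]
    have hn : β + 1 - γ = (β - γ) + 1 := by omega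
    rw [hn]
    refine Finset.sum_congr rfl fun k hk => ?_
    have hk' := Finset.mem_range.mp hk
    congr 1
    · congr 1; omega
    · congr 1; omega
  rw [hre, ← Ring.add_choose_eq _ (Commute.all _ _)]
  have hsum : (-(p : ℚ) - 1 - γ) + ((p : ℚ) + β) = (β : ℚ) - γ - 1 := by ring
  rw [hsum]
  by_cases h : γ = β
  · subst h
    simp only [if_pos rfl, Nat.sub_self]
    rw [show (γ : ℚ) - γ - 1 = -1 by ring]
    rw [Ring.choose_zero_right, mul_one]
    simp
  · rw [if_neg h]
    have h1 : (β : ℚ) - γ - 1 = ((β - γ - 1 : ℕ) : ℚ) := by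
      have : γ < β := lt_of_le_of_ne hγβ h
      push_cast [Nat.cast_sub (by omega : 1 ≤ β - γ), Nat.cast_sub hγβ]
      ring
    rw [h1, Ring.choose_natCast]
    rw [Nat.choose_eq_zero_of_lt (by omega)]
    simp
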